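/- Let q(m,n) = a m² + b m n + c n² be an integral binary quadratic form with a ≠ 0 and discriminant Δ = b² − 4ac = δ² for some positive integer δ, and let k be a nonzero integer. Then the number of pairs (m,n) ∈ ℤ² with q(m,n) = k is at most the number of integer divisors of k, i.e. at most #{u ∈ ℤ : u ∣ k} (divisors counted with both signs). -/

import Mathlib

/-- For a form of positive square discriminant with `a ≠ 0`, the number of
representations of a nonzero integer `k` is at most the number of integer
divisors of `k`. -/
theorem stmt_11 (a b c δ k : ℤ) (ha : a ≠ 0) (hδ : 0 < δ)
    (hΔ : b ^ 2 - 4 * a * c = δ ^ 2) (hk : k ≠ 0) :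
    {x : ℤ × ℤ | a * x.1 ^ 2 + b * x.1 * x.2 + c * x.2 ^ 2 = k}.encard ≤
      {u : ℤ | u ∣ k}.encard := by
  -- parity: b ≡ δ (mod 2)
  have hprod : (b - δ) * (b + δ) = 2 * (2 * (a * c)) := by linear_combination hΔ
  have heven : (2:ℤ) ∣ (b - δ) := by
    have hev : Even ((b - δ) * (b + δ)) := ⟨2 * (a * c), by linarith⟩
    rcases Int.even_mul.mp hev with h | h
    · exact h.two_dvd
    · have h2 := h.two_dvd
      omega
  obtain ⟨e, he⟩ := heven
  have hb2 : b = 2 * e + δ := by omega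
  have hef : e * (e + δ) = a * c := by
    have h4 : (4:ℤ) * (e * (e + δ)) = 4 * (a * c) := by linear_combination hΔ - (b + 2*e + δ) * (by omega : b - (2*e+δ) = 0)
    exact mul_left_cancel₀ (by norm_num) h4
  set g : ℤ := (Int.gcd a e : ℤ) with hgdef
  have hgpos : 0 < Int.gcd a e := Int.gcd_pos_of_ne_zero_left e ha
  have hg0 : g ≠ 0 := by positivity
  obtain ⟨a', ha'⟩ : g ∣ a := Int.gcd_dvd_left a e
  obtain ⟨e', he'⟩ : g ∣ e := Int.gcd_dvd_right a e
  have ha'0 : a' ≠ 0 := by rintro rfl; simp at ha'; exact ha ha'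
  have ha'' : a' = a / g := by rw [ha']; exact (Int.mul_ediv_cancel_left _ hg0).symm
  have he'' : e' = e / g := by rw [he']; exact (Int.mul_ediv_cancel_left _ hg0).symm
  have hcop : Int.gcd a' e' = 1 := by
    rw [ha'', he'', hgdef]; exact Int.gcd_div_gcd_div_gcd hgpos
  -- a' divides f := e + δ
  have hdvd : a' ∣ e' * (e + δ) := by
    refine ⟨c, ?_⟩
    have : g * (e' * (e + δ)) = g * (a' * c) := by
      calc g * (e' * (e + δ)) = e * (e + δ) := by rw [he']; ring
        _ = a * c := hef
        _ = g * (a' * c) := by rw [ha']; ring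
    exact mul_left_cancel₀ hg0 this
  obtain ⟨f', hf'⟩ : a' ∣ (e + δ) := (Int.isCoprime_iff_gcd_eq_one.mpr hcop).dvd_of_dvd_mul_left hdvd
  have hc : c = e' * f' := by
    have : a' * (e' * f') = a' * c := by
      have h1 : g * (a' * (e' * f')) = g * (a' * c) := by
        calc g * (a' * (e' * f')) = e * (e + δ) := by rw [hf', he']; ring
          _ = a * c := hef
          _ = g * (a' * c) := by rw [ha']; ring
      exact mul_left_cancel₀ hg0 h1
    exact (mul_left_cancel₀ ha'0 this).symm
  have hb : b = g * e' + a' * f' := by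
    have : b - δ = 2 * (g * e') := by rw [← he']; exact he
    have h2 : e + δ = a' * f' := hf'
    omega
  have hdet : g * e' - a' * f' = -δ := by
    have h2 : e + δ = a' * f' := hf'
    have h3 : e = g * e' := he'
    omega
  -- factorization of the form
  have hfact : ∀ m n : ℤ, a * m ^ 2 + b * m * n + c * n ^ 2
      = (g * m + f' * n) * (a' * m + e' * n) := by
    intro m n
    rw [ha', hb, hc]; ring
  set S := {x : ℤ × ℤ | a * x.1 ^ 2 + b * x.1 * x.2 + c * x.2 ^ 2 = k} with hS
  set F : ℤ × ℤ → ℤ := fun x => g * x.1 + f' * x.2 with hF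
  have hsub : F '' S ⊆ {u : ℤ | u ∣ k} := by
    rintro u ⟨x, hx, rfl⟩
    exact ⟨a' * x.1 + e' * x.2, by rw [← hx, hfact]⟩
  have hinj : Set.InjOn F S := by
    rintro ⟨m₁, n₁⟩ hx ⟨m₂, n₂⟩ hy hxy
    simp only [hS, Set.mem_setOf_eq, hfact] at hx hy
    simp only [hF] at hxy
    have hu0 : g * m₁ + f' * n₁ ≠ 0 := by
      intro h0; rw [h0, zero_mul] at hx; exact hk hx.symm
    have hv : a' * m₁ + e' * n₁ = a' * m₂ + e' * n₂ := by
      apply mul_left_cancel₀ hu0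
      rw [hx, hxy, hy]
    have hδ0 : (-δ) ≠ 0 := by omega
    have hm : m₁ = m₂ := by
      have : (-δ) * (m₁ - m₂) = 0 := by
        rw [← hdet]; linear_combination e' * hxy - f' * hv
      have := mul_eq_zero.mp this
      rcases this with h | h
      · exact absurd h hδ0
      · omega
    have hn : n₁ = n₂ := by
      have : (-δ) * (n₁ - n₂) = 0 := by
        rw [← hdet]; linear_combination g * hv - a' * hxy
      rcases mul_eq_zero.mp this with h | h
      · exact absurd h hδ0
      · omega
    simp [hm, hn]
  calc S.encard = (F '' S).encard := (hinj.encard_image).symm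
    _ ≤ ({u : ℤ | u ∣ k}).encard := Set.encard_mono hsub
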